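/- The lifting map A ↦ rowspace([I_m | A]) from m×n matrices over a field F to m-dimensional subspaces of F^{m+n} is injective. Consequently, a lifted MRD code with minimum rank distance δ = d/2 in F_q^{m×n} (m = k, n = v - k) yields q^{max(k,v-k)·(min(k,v-k) - d/2 + 1)} distinct k-dimensional subspaces of F_q^v whose pairwise subspace distance is at least d, provided k ≤ v and d ≤ 2·min(k, v-k) with d even. -/

import Mathlib

open Module


open Polynomial Module

section Ext
variable (F : Type*) [Field F] [Fintype F] (N : ℕ)

/-- An extension field of `F` of degree `N`: splitting field of `X^(q^N) - X`. -/
noncomputable def ExtF : Type _ :=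
  Polynomial.SplittingField (X ^ (Fintype.card F) ^ N - X : F[X])

noncomputable instance : Field (ExtF F N) := inferInstanceAs (Field (SplittingField _))
noncomputable instance : Algebra F (ExtF F N) := inferInstanceAs (Algebra F (SplittingField _))
instance : FiniteDimensional F (ExtF F N) :=
  inferInstanceAs (FiniteDimensional F (SplittingField _))
instance : Finite (ExtF F N) := Module.finite_of_finite F
noncomputable instance : Fintype (ExtF F N) := Fintype.ofFinite _

theorem pow_card_pow_ExtF (x : ExtF F N) : x ^ (Fintype.card F) ^ N = x := by
  obtain ⟨p, hchar⟩ := CharP.exists F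
  haveI := hchar
  obtain ⟨e, hp, hqe⟩ := FiniteField.card F p
  haveI : Fact p.Prime := ⟨hp⟩
  haveI hcharL : CharP (ExtF F N) p := (Algebra.charP_iff F (ExtF F N) p).mp hchar
  have hqN : (Fintype.card F) ^ N = p ^ (e * N : ℕ) := by rw [hqe, ← pow_mul]
  let S : Subalgebra F (ExtF F N) :=
    { carrier := {x | x ^ (Fintype.card F) ^ N = x}
      mul_mem' := fun {a b} ha hb => by
        simp only [Set.mem_setOf_eq] at *
        rw [mul_pow, ha, hb]
      one_mem' := by simp
      add_mem' := fun {a b} ha hb => by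
        simp only [Set.mem_setOf_eq] at *
        rw [hqN, add_pow_char_pow, ← hqN, ha, hb]
      zero_mem' := by
        simp only [Set.mem_setOf_eq]
        exact zero_pow (by positivity)
      algebraMap_mem' := fun r => by
        simp only [Set.mem_setOf_eq]
        rw [← map_pow, FiniteField.pow_card_pow] }
  have hS : S = ⊤ := by
    refine top_unique ?_
    have h : Algebra.adjoin F
        ((X ^ (Fintype.card F) ^ N - X : F[X]).rootSet (ExtF F N)) = ⊤ :=
      SplittingField.adjoin_rootSet _
    rw [← h]
    refine Algebra.adjoin_le fun x hx => ?_
    have h2 := (mem_rootSet.mp hx).2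
    simp only [map_sub, map_pow, aeval_X, sub_eq_zero] at h2
    exact h2
  have : x ∈ S := hS ▸ Algebra.mem_top
  exact this

theorem card_ExtF (hN : N ≠ 0) : Fintype.card (ExtF F N) = Fintype.card F ^ N := by
  obtain ⟨p, hchar⟩ := CharP.exists F
  haveI := hchar
  obtain ⟨e, hp, hqe⟩ := FiniteField.card F p
  haveI : Fact p.Prime := ⟨hp⟩
  have hq1 : 1 < Fintype.card F := Fintype.one_lt_card
  have aux : (X ^ (Fintype.card F) ^ N - X : F[X]) ≠ 0 :=
    FiniteField.X_pow_card_pow_sub_X_ne_zero _ hN hq1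
  have hsep : Separable (X ^ (Fintype.card F) ^ N - X : F[X]) := by
    refine galois_poly_separable p _ ?_
    rw [hqe, ← pow_mul]
    exact dvd_pow_self p (by positivity)
  have key : Fintype.card ((X ^ (Fintype.card F) ^ N - X : F[X]).rootSet (ExtF F N)) =
      (X ^ (Fintype.card F) ^ N - X : F[X]).natDegree :=
    card_rootSet_eq_natDegree hsep (SplittingField.splits _)
  have hdeg : (X ^ (Fintype.card F) ^ N - X : F[X]).natDegree = (Fintype.card F) ^ N :=
    FiniteField.X_pow_card_pow_sub_X_natDegree_eq _ hN hq1
  have huniv : (X ^ (Fintype.card F) ^ N - X : F[X]).rootSet (ExtF F N) = Set.univ := by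
    rw [Set.eq_univ_iff_forall]
    intro x
    rw [mem_rootSet_of_ne aux]
    simp only [map_sub, map_pow, aeval_X, sub_eq_zero]
    exact pow_card_pow_ExtF F N x
  have hc : Fintype.card ((X ^ (Fintype.card F) ^ N - X : F[X]).rootSet (ExtF F N)) =
      Fintype.card (ExtF F N) :=
    Fintype.card_congr ((Equiv.setCongr huniv).trans (Equiv.Set.univ _))
  rw [hdeg] at key
  exact hc.symm.trans key

theorem finrank_ExtF (hN : N ≠ 0) : finrank F (ExtF F N) = N := by
  have h1 := card_eq_pow_finrank (K := F) (V := ExtF F N)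
  rw [card_ExtF F N hN] at h1
  exact (Nat.pow_right_injective Fintype.one_lt_card h1).symm
end Ext

open Polynomial Module

section Qpow
variable {F : Type*} [Field F] [Fintype F] (L : Type*) [Field L] [Algebra F L]

/-- `x ↦ x ^ q ^ i` as an `F`-linear map on an extension `L` of the finite field `F`. -/
noncomputable def qpow (i : ℕ) : L →ₗ[F] L where
  toFun x := x ^ (Fintype.card F) ^ i
  map_add' x y := by
    obtain ⟨p, hchar⟩ := CharP.exists F
    haveI := hchar
    obtain ⟨e, hp, hqe⟩ := FiniteField.card F p
    haveI : Fact p.Prime := ⟨hp⟩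
    haveI : CharP L p := (Algebra.charP_iff F L p).mp hchar
    have hqN : (Fintype.card F) ^ i = p ^ (e * i : ℕ) := by rw [hqe, ← pow_mul]
    rw [hqN]
    exact add_pow_char_pow x y p (e * i)
  map_smul' a x := by
    simp only [RingHom.id_apply, Algebra.smul_def, mul_pow, ← map_pow,
      FiniteField.pow_card_pow]

variable {K : ℕ} (c : Fin K → L)

/-- The `q`-polynomial (as linear map) with coefficients `c`. -/
noncomputable def qpoly : L →ₗ[F] L := ∑ i : Fin K, c i • qpow L (i : ℕ)

lemma qpoly_apply (x : L) :
    (qpoly (F := F) L c) x = ∑ i : Fin K, c i * x ^ (Fintype.card F) ^ (i : ℕ) := by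
  simp [qpoly, qpow, smul_eq_mul]

lemma qpoly_sub (c' : Fin K → L) :
    qpoly (F := F) L (c - c') = qpoly (F := F) L c - qpoly (F := F) L c' := by
  simp [qpoly, sub_smul, Finset.sum_sub_distrib]
  rw [← Finset.sum_sub_distrib]
  exact Finset.sum_congr rfl fun i _ => LinearMap.ext fun x => by simp [sub_mul]

lemma finrank_ker_qpoly_le [Fintype L] (hc : c ≠ 0) (hK : 1 ≤ K) :
    finrank F (LinearMap.ker (qpoly (F := F) L c)) ≤ K - 1 := by
  classical
  set q := Fintype.card F with hqdef
  have hq1 : 1 < q := Fintype.one_lt_card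
  set P : L[X] := ∑ i : Fin K, C (c i) * X ^ (q ^ (i : ℕ)) with hP
  have heval : ∀ x : L, P.eval x = (qpoly (F := F) L c) x := by
    intro x
    rw [qpoly_apply]
    simp [P, eval_finset_sum, hqdef]
  have hPne : P ≠ 0 := by
    obtain ⟨i, hi⟩ : ∃ i, c i ≠ 0 := by
      by_contra h
      push_neg at h
      exact hc (funext h)
    intro h0
    have : P.coeff (q ^ (i : ℕ)) = c i := by
      rw [hP, finset_sum_coeff]
      rw [Finset.sum_eq_single i]
      · simp [coeff_C_mul, coeff_X_pow]
      · intro j _ hj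
        have hne : q ^ (i : ℕ) ≠ q ^ (j : ℕ) := fun h =>
          hj (Fin.ext (Nat.pow_right_injective hq1 h.symm))
        simp [coeff_C_mul, coeff_X_pow, hne]
      · simp
    rw [h0] at this
    simp at this
    exact hi this.symm
  have hdeg : P.natDegree ≤ q ^ (K - 1) := by
    refine natDegree_sum_le_of_forall_le _ _ fun i _ => ?_
    refine (natDegree_C_mul_le _ _).trans ?_
    rw [natDegree_X_pow]
    exact Nat.pow_le_pow_right (le_of_lt hq1) (by omega)
  -- the kernel injects into the root set of `P`
  haveI : Fintype (LinearMap.ker (qpoly (F := F) L c)) := Fintype.ofFinite _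
  have hcard : Fintype.card (LinearMap.ker (qpoly (F := F) L c)) ≤ q ^ (K - 1) := by
    have hinj : Function.Injective
        (fun x : LinearMap.ker (qpoly (F := F) L c) =>
          (⟨(x : L), by
            rw [Multiset.mem_toFinset, mem_roots hPne]
            exact (heval (x : L)).trans x.2⟩ : P.roots.toFinset)) := by
      intro x y h
      apply Subtype.ext
      simpa using congrArg Subtype.val h
    calc Fintype.card (LinearMap.ker (qpoly (F := F) L c))
        ≤ Fintype.card P.roots.toFinset := Fintype.card_le_of_injective _ hinj
      _ = P.roots.toFinset.card := Fintype.card_coe _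
      _ ≤ Multiset.card P.roots := Multiset.toFinset_card_le _
      _ ≤ P.natDegree := card_roots' P
      _ ≤ q ^ (K - 1) := hdeg
  have := card_eq_pow_finrank (K := F) (V := LinearMap.ker (qpoly (F := F) L c))
  rw [this] at hcard
  exact (Nat.pow_le_pow_iff_right hq1).mp hcard
end Qpow

section Code
open Matrix
variable {F : Type*} [Field F] [Fintype F]

theorem exists_rank_code (δ M N : ℕ) (hδ1 : 1 ≤ δ) (hδM : δ ≤ M) (hMN : M ≤ N) :
    ∃ S : Finset (Matrix (Fin M) (Fin N) F),
      S.card = (Fintype.card F) ^ (N * (M - δ + 1)) ∧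
      ∀ A ∈ S, ∀ B ∈ S, A ≠ B →
        δ ≤ finrank F (LinearMap.range (A - B).vecMulLinear) := by
  classical
  have hN : N ≠ 0 := by omega
  set K := M - δ + 1 with hK
  have hβN : finrank F (ExtF F N) = N := finrank_ExtF F N hN
  let β : Basis (Fin N) F (ExtF F N) := (Module.finBasis F (ExtF F N)).reindex (finCongr hβN)
  let ι : (Fin M → F) →ₗ[F] (ExtF F N) :=
    Fintype.linearCombination F (fun i : Fin M => β (Fin.castLE hMN i))
  have hιdef : ∀ x, ι x = ∑ i, x i • β (Fin.castLE hMN i) := fun x => by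
    simp [ι, Fintype.linearCombination_apply]
  have hι : Function.Injective ι := by
    have li : LinearIndependent F (fun i : Fin M => β (Fin.castLE hMN i)) :=
      β.linearIndependent.comp _ (Fin.castLE_injective hMN)
    rw [← LinearMap.ker_eq_bot, eq_bot_iff]
    intro x hx
    have hx0 : ι x = 0 := hx
    rw [hιdef] at hx0
    have := Fintype.linearIndependent_iff.mp li x hx0
    simpa [Submodule.mem_bot, funext_iff] using this
  let A : (Fin K → (ExtF F N)) → Matrix (Fin M) (Fin N) F := fun c =>
    Matrix.of fun i j => β.repr ((qpoly (F := F) (ExtF F N) c) (β (Fin.castLE hMN i))) j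
  have hAsub : ∀ c c', A c - A c' = A (c - c') := by
    intro c c'
    ext i j
    simp [A, qpoly_sub, Matrix.sub_apply]
  have hrank : ∀ c : Fin K → (ExtF F N), c ≠ 0 →
      δ ≤ finrank F (LinearMap.range (A c).vecMulLinear) := by
    intro c hc
    have hcomp : (A c).vecMulLinear =
        (β.equivFun.toLinearMap) ∘ₗ (qpoly (F := F) (ExtF F N) c) ∘ₗ ι := by
      apply LinearMap.ext; intro x
      funext j
      have h1 : (qpoly (F := F) (ExtF F N) c) (ι x) =
          ∑ i, x i • (qpoly (F := F) (ExtF F N) c) (β (Fin.castLE hMN i)) := by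
        rw [hιdef, map_sum]
        simp [_root_.map_smul]
      simp only [LinearMap.comp_apply, h1, Matrix.vecMulLinear_apply,
        LinearEquiv.coe_coe, Basis.equivFun_apply, map_sum, _root_.map_smul]
      simp [Matrix.vecMul, dotProduct, A, Finset.sum_apply,
        Finsupp.coe_finset_sum, Finsupp.smul_apply, smul_eq_mul]
    rw [hcomp]
    have h1 : finrank F (LinearMap.range
          ((β.equivFun.toLinearMap) ∘ₗ (qpoly (F := F) (ExtF F N) c) ∘ₗ ι))
        = finrank F (LinearMap.range ((qpoly (F := F) (ExtF F N) c) ∘ₗ ι)) := by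
      rw [LinearMap.range_comp]
      exact LinearEquiv.finrank_map_eq _ _
    rw [h1]
    have h2 : finrank F (LinearMap.range ((qpoly (F := F) (ExtF F N) c) ∘ₗ ι)) +
        finrank F (LinearMap.ker ((qpoly (F := F) (ExtF F N) c) ∘ₗ ι)) = M := by
      rw [LinearMap.finrank_range_add_finrank_ker]
      exact Module.finrank_fin_fun F
    have h3 : finrank F (LinearMap.ker ((qpoly (F := F) (ExtF F N) c) ∘ₗ ι)) ≤ K - 1 := by
      have hmap : Submodule.map ι (LinearMap.ker ((qpoly (F := F) (ExtF F N) c) ∘ₗ ι)) ≤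
          LinearMap.ker (qpoly (F := F) (ExtF F N) c) := by
        rintro _ ⟨x, hx, rfl⟩
        simpa [LinearMap.mem_ker] using hx
      have heq : finrank F (LinearMap.ker ((qpoly (F := F) (ExtF F N) c) ∘ₗ ι)) =
          finrank F (Submodule.map ι (LinearMap.ker ((qpoly (F := F) (ExtF F N) c) ∘ₗ ι))) :=
        (Submodule.equivMapOfInjective ι hι _).finrank_eq
      rw [heq]
      exact le_trans (Submodule.finrank_mono hmap)
        (finrank_ker_qpoly_le (ExtF F N) c hc (by omega))
    omega
  have hAinj : Function.Injective A := by
    intro c c' h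
    by_contra hne
    have h0 : A (c - c') = 0 := by rw [← hAsub, h, sub_self]
    have hr := hrank (c - c') (sub_ne_zero.mpr hne)
    rw [h0] at hr
    have hz : (0 : Matrix (Fin M) (Fin N) F).vecMulLinear = 0 := by
      apply LinearMap.ext; intro x
      simp [Matrix.vecMulLinear_apply]
    rw [hz, LinearMap.range_zero] at hr
    simp [finrank_bot] at hr
    omega
  refine ⟨(Finset.univ : Finset (Fin K → (ExtF F N))).image A, ?_, ?_⟩
  · rw [Finset.card_image_of_injective _ hAinj, Finset.card_univ, Fintype.card_fun,
      card_ExtF F N hN, Fintype.card_fin, ← pow_mul]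
  · intro A0 hA0 B0 hB0 hne
    obtain ⟨c, -, rfl⟩ := Finset.mem_image.mp hA0
    obtain ⟨c', -, rfl⟩ := Finset.mem_image.mp hB0
    rw [hAsub]
    exact hrank _ (sub_ne_zero.mpr (fun h => hne (by rw [h])))

theorem finrank_range_vecMulLinear_transpose {m n : ℕ} (A : Matrix (Fin m) (Fin n) F) :
    finrank F (LinearMap.range Aᵀ.vecMulLinear) = finrank F (LinearMap.range A.vecMulLinear) := by
  rw [Matrix.vecMulLinear_transpose, ← Matrix.mulVecLin_transpose]
  have := Matrix.rank_transpose A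
  simpa [Matrix.rank] using this.symm

theorem exists_rank_code' (δ m n : ℕ) (hδ1 : 1 ≤ δ) (hδm : δ ≤ m) (hδn : δ ≤ n) :
    ∃ S : Finset (Matrix (Fin m) (Fin n) F),
      S.card = (Fintype.card F) ^ (max m n * (min m n - δ + 1)) ∧
      ∀ A ∈ S, ∀ B ∈ S, A ≠ B →
        δ ≤ finrank F (LinearMap.range (A - B).vecMulLinear) := by
  classical
  rcases le_total m n with hmn | hnm
  · obtain ⟨S, hcard, hS⟩ := exists_rank_code (F := F) δ m n hδ1 hδm hmn
    refine ⟨S, ?_, hS⟩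
    rw [hcard, max_eq_right hmn, min_eq_left hmn]
  · obtain ⟨S, hcard, hS⟩ := exists_rank_code (F := F) δ n m hδ1 hδn hnm
    refine ⟨S.image Matrix.transpose, ?_, ?_⟩
    · rw [Finset.card_image_of_injective _ Matrix.transpose_injective, hcard,
        max_eq_left hnm, min_eq_right hnm]
    · intro A hA B hB hne
      obtain ⟨A0, hA0, rfl⟩ := Finset.mem_image.mp hA
      obtain ⟨B0, hB0, rfl⟩ := Finset.mem_image.mp hB
      rw [← Matrix.transpose_sub, finrank_range_vecMulLinear_transpose]
      exact hS A0 hA0 B0 hB0 (fun h => hne (by rw [h]))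
end Code

section Lift
open Matrix
variable {F : Type*} [Field F] {m n : ℕ}

/-- The lifting of a matrix: the row space of `[I | A]`. -/
noncomputable def liftMat (A : Matrix (Fin m) (Fin n) F) : Submodule F (Fin m ⊕ Fin n → F) :=
  LinearMap.range (Matrix.fromCols (1 : Matrix (Fin m) (Fin m) F) A).vecMulLinear

lemma vecMulLinear_fromColumns_one_injective (A : Matrix (Fin m) (Fin n) F) :
    Function.Injective (Matrix.fromCols (1 : Matrix (Fin m) (Fin m) F) A).vecMulLinear := by
  intro x y hxy
  have h2 : Sum.elim (x ᵥ* (1 : Matrix (Fin m) (Fin m) F)) (x ᵥ* A) =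
      Sum.elim (y ᵥ* (1 : Matrix (Fin m) (Fin m) F)) (y ᵥ* A) := by
    rw [← Matrix.vecMul_fromCols, ← Matrix.vecMul_fromCols]
    exact hxy
  have h3 := funext fun k => congrFun h2 (Sum.inl k)
  simpa [Matrix.vecMul_one] using h3

lemma liftM_injective : Function.Injective (liftMat (F := F) (m := m) (n := n)) := by
  intro A B h
  ext i j
  have hmem : Sum.elim (Pi.single i 1) (Pi.single i 1 ᵥ* A) ∈ liftMat B := by
    rw [← h]
    exact ⟨Pi.single i 1, by
      rw [Matrix.vecMulLinear_apply, Matrix.vecMul_fromCols, Matrix.vecMul_one]⟩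
  obtain ⟨y, hy⟩ := hmem
  rw [Matrix.vecMulLinear_apply, Matrix.vecMul_fromCols, Matrix.vecMul_one] at hy
  have hyl : y = Pi.single i 1 := funext fun k => congrFun hy (Sum.inl k)
  have hyr := congrFun hy (Sum.inr j)
  rw [hyl] at hyr
  simpa [Matrix.single_one_vecMul] using hyr.symm

lemma finrank_liftM (A : Matrix (Fin m) (Fin n) F) : Module.finrank F (liftMat A) = m := by
  rw [liftMat, LinearMap.finrank_range_of_inj (vecMulLinear_fromColumns_one_injective A),
    Module.finrank_fin_fun]

lemma liftM_inf (A B : Matrix (Fin m) (Fin n) F) :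
    liftMat A ⊓ liftMat B =
      Submodule.map (Matrix.fromCols (1 : Matrix (Fin m) (Fin m) F) A).vecMulLinear
        (LinearMap.ker (A - B).vecMulLinear) := by
  apply le_antisymm
  · intro v hv
    obtain ⟨hvA, hvB⟩ := Submodule.mem_inf.mp hv
    obtain ⟨x, hx⟩ := hvA
    obtain ⟨y, hy⟩ := hvB
    rw [Matrix.vecMulLinear_apply, Matrix.vecMul_fromCols, Matrix.vecMul_one] at hx hy
    have hxy : x = y := funext fun k => by
      have h1 := congrFun hx (Sum.inl k)
      have h2 := congrFun hy (Sum.inl k)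
      simp only [Sum.elim_inl] at h1 h2
      rw [h1, h2]
    refine ⟨x, ?_, ?_⟩
    · simp only [SetLike.mem_coe]
      rw [LinearMap.mem_ker, Matrix.vecMulLinear_apply, Matrix.vecMul_sub]
      have hAj : ∀ j, (x ᵥ* A) j = v (Sum.inr j) := fun j => congrFun hx (Sum.inr j)
      have hBj : ∀ j, (x ᵥ* B) j = v (Sum.inr j) := fun j => by
        rw [hxy]; exact congrFun hy (Sum.inr j)
      funext j
      simp [hAj j, hBj j]
    · rw [Matrix.vecMulLinear_apply, Matrix.vecMul_fromCols, Matrix.vecMul_one, ← hx]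
  · rintro _ ⟨x, hx, rfl⟩
    simp only [SetLike.mem_coe, LinearMap.mem_ker, Matrix.vecMulLinear_apply,
      Matrix.vecMul_sub, sub_eq_zero] at hx
    constructor
    · exact ⟨x, rfl⟩
    · refine ⟨x, ?_⟩
      rw [Matrix.vecMulLinear_apply, Matrix.vecMulLinear_apply,
        Matrix.vecMul_fromCols, Matrix.vecMul_fromCols, hx]
end Lift

open Module


/-- The lifting map `A ↦ rowspace [I | A]` is injective; consequently a lifted MRD code with
minimum rank distance `δ = d/2` yields `q ^ (max m n * (min m n - δ + 1))` distinct
`m`-dimensional subspaces of `F_q^{m+n}` (here `m = k`, `n = v - k`) with pairwise subspace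
distance at least `d = 2δ`. -/
theorem lifting_injective_and_lifted_MRD {F : Type*} [Field F] [Fintype F] {q m n δ : ℕ}
    (hq : Fintype.card F = q) (hδ1 : 1 ≤ δ) (hδm : δ ≤ m) (hδn : δ ≤ n) :
    Function.Injective (fun A : Matrix (Fin m) (Fin n) F =>
      LinearMap.range (Matrix.fromCols (1 : Matrix (Fin m) (Fin m) F) A).vecMulLinear) ∧
    ∃ C : Finset (Submodule F (Fin m ⊕ Fin n → F)),
      C.card = q ^ (max m n * (min m n - δ + 1)) ∧
      (∀ U ∈ C, finrank F U = m) ∧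
      (∀ U ∈ C, ∀ W ∈ C, U ≠ W →
        (2 * δ : ℤ) ≤ finrank F U + finrank F W - 2 * finrank F ↥(U ⊓ W)) := by
  classical
  refine ⟨liftM_injective, ?_⟩
  obtain ⟨S, hcard, hS⟩ := exists_rank_code' (F := F) δ m n hδ1 hδm hδn
  refine ⟨S.image liftMat, ?_, ?_, ?_⟩
  · rw [Finset.card_image_of_injective _ liftM_injective, hcard, hq]
  · intro U hU
    obtain ⟨A, -, rfl⟩ := Finset.mem_image.mp hU
    exact finrank_liftM A
  · intro U hU W hW hUW
    obtain ⟨A, hA, rfl⟩ := Finset.mem_image.mp hU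
    obtain ⟨B, hB, rfl⟩ := Finset.mem_image.mp hW
    have hAB : A ≠ B := fun h => hUW (by rw [h])
    have hker : finrank F ↥(liftMat A ⊓ liftMat B) ≤ m - δ := by
      rw [liftM_inf]
      rw [← (Submodule.equivMapOfInjective _
        (vecMulLinear_fromColumns_one_injective A) _).finrank_eq]
      have h2 := LinearMap.finrank_range_add_finrank_ker (A - B).vecMulLinear
      rw [Module.finrank_fin_fun] at h2
      have h3 := hS A hA B hB hAB
      omega
    rw [finrank_liftM A, finrank_liftM B]
    have h4 := hδm
    omega
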